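/- Let G be a game where each player n maximizes a continuous function φ_n(a_n, a_{−n}), concave in a_n, over a feasible set X_n(a_{−n}) = {a_n ∈ A_n : (a_n, a_{−n}) ∈ C} for a shared convex compact set C ⊆ ∏_n A_n. If each φ_n is differentiable and a* ∈ C solves the variational inequality ⟨F(a*), a − a*⟩ ≤ 0 for all a ∈ C, where F(a) = (∇_{a_1}φ_1(a), …, ∇_{a_N}φ_N(a)), then a* is a generalized Nash equilibrium: for every n, φ_n(a*_n, a*_{−n}) ≥ φ_n(a_n, a*_{−n}) for all a_n with (a_n, a*_{−n}) ∈ C. -/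

import Mathlib

open Filter Topology

lemma concave_grad {E : Type*} [NormedAddCommGroup E] [InnerProductSpace ℝ E]
    [CompleteSpace E] {f : E → ℝ} (hd : Differentiable ℝ f)
    (hc : ConcaveOn ℝ Set.univ f) (x y : E) :
    f y - f x ≤ inner ℝ (gradient f x) (y - x) := by
  set v := y - x with hv
  have hg : HasGradientAt f (gradient f x) x := (hd x).hasGradientAt
  set h : ℝ → ℝ := fun t => f (x + t • v) with hh
  have hline : HasDerivAt h (inner ℝ (gradient f x) v) 0 := by
    have h1 : HasDerivAt (fun t : ℝ => x + t • v) v 0 := by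
      simpa using ((hasDerivAt_id (0:ℝ)).smul_const v).const_add x
    have h2 : HasFDerivAt f ((InnerProductSpace.toDual ℝ E) (gradient f x)) (x + (0:ℝ) • v) := by
      simpa using hg.hasFDerivAt
    have := h2.comp_hasDerivAt 0 h1
    exact this.congr_deriv InnerProductSpace.toDual_apply_apply
  have hslope : Tendsto (slope h 0) (𝓝[>] 0) (𝓝 (inner ℝ (gradient f x) v)) :=
    (hasDerivAt_iff_tendsto_slope.mp hline).mono_left
      (nhdsWithin_mono 0 (fun t ht => ne_of_gt ht))
  refine ge_of_tendsto hslope ?_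
  filter_upwards [Ioc_mem_nhdsGT_of_mem (Set.mem_Ico.mpr ⟨le_refl 0, one_pos⟩)]
    with t ht
  have ht0 : 0 < t := ht.1
  have hconc := hc.2 (Set.mem_univ x) (Set.mem_univ y)
    (show (0:ℝ) ≤ 1 - t by linarith [ht.2]) ht0.le (show (1 - t) + t = 1 by ring)
  have hx : x + t • v = (1 - t) • x + t • y := by
    simp [hv, smul_sub, sub_smul]; abel
  have h0 : h 0 = f x := by simp [hh]
  have hht : t • (f y) + (1 - t) • (f x) ≤ h t := by
    rw [hh]; simp only; rw [hx]; linarith [hconc]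
  rw [slope_def_field]
  have : f y - f x ≤ (h t - h 0) / (t - 0) := by
    rw [h0, sub_zero, le_div_iff₀ ht0]
    simp only [smul_eq_mul] at hht
    nlinarith
  simpa [div_eq_inv_mul] using this



/-- In a shared-constraint (jointly convex) generalized Nash equilibrium
problem where each player's payoff φ_n is C¹ and concave in its own variable, any
solution a* of the variational inequality for the pseudogradient
F(a) = (∇_{a_1}φ_1(a), …, ∇_{a_N}φ_N(a)) over the shared constraint set C is a
generalized Nash equilibrium. -/
theorem variational_equilibrium_is_gne
    {N : ℕ} (d : Fin N → ℕ)
    (C : Set ((n : Fin N) → EuclideanSpace ℝ (Fin (d n))))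
    (hCconv : Convex ℝ C) (hCcomp : IsCompact C)
    (φ : Fin N → ((n : Fin N) → EuclideanSpace ℝ (Fin (d n))) → ℝ)
    (hφcont : ∀ n, Continuous (φ n))
    (hφdiff : ∀ n, ∀ a : (m : Fin N) → EuclideanSpace ℝ (Fin (d m)),
      Differentiable ℝ (fun y : EuclideanSpace ℝ (Fin (d n)) =>
        φ n (Function.update a n y)))
    (hφconc : ∀ n, ∀ a : (m : Fin N) → EuclideanSpace ℝ (Fin (d m)),
      ConcaveOn ℝ Set.univ (fun y : EuclideanSpace ℝ (Fin (d n)) =>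
        φ n (Function.update a n y)))
    (astar : (n : Fin N) → EuclideanSpace ℝ (Fin (d n))) (hastar : astar ∈ C)
    (hvi : ∀ a ∈ C,
      ∑ n, (inner ℝ
        (gradient (fun y : EuclideanSpace ℝ (Fin (d n)) =>
          φ n (Function.update astar n y)) (astar n))
        (a n - astar n) : ℝ) ≤ 0) :
    ∀ n, ∀ y : EuclideanSpace ℝ (Fin (d n)),
      Function.update astar n y ∈ C →
        φ n (Function.update astar n y) ≤ φ n astar := by
  intro n y hy
  have hvi' := hvi _ hy
  have hsum : ∑ m, (inner ℝ
      (gradient (fun z : EuclideanSpace ℝ (Fin (d m)) =>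
        φ m (Function.update astar m z)) (astar m))
      (Function.update astar n y m - astar m) : ℝ)
      = inner ℝ (gradient (fun z : EuclideanSpace ℝ (Fin (d n)) =>
        φ n (Function.update astar n z)) (astar n)) (y - astar n) := by
    rw [Finset.sum_eq_single n]
    · simp
    · intro m _ hm
      simp [Function.update_of_ne hm]
    · simp
  rw [hsum] at hvi'
  have hgrad := concave_grad (hφdiff n astar) (hφconc n astar) (astar n) y
  have heq : Function.update astar n (astar n) = astar := Function.update_eq_self n astar
  rw [heq] at hgrad
  linarith
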